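/- Correctness of the synthesized invariant for mode q2 of the nuclear reactor system: Consider the planar affine vector field f(p, x) = (1, x/10 − 6p − 50), i.e. the ODE ṗ = 1, ẋ = x/10 − 6p − 50. Let D₂' = {(p, x) ∈ ℝ² : 0 ≤ p ≤ 1 ∧ x − 4135/8 ≥ p·(6145/12 − 4135/8) ∧ x − 550 − (36/25)·(6575/12 − 550)·(p − 5/6)² ≤ 0} and let H₂ = ℝ² \ {(p, x) : p = 1 ∧ 6145/12 ≤ x ≤ 550}. Then D₂' is a continuous invariant of (H₂, f): for every solution (p(t), x(t)) of the ODE with (p(0), x(0)) ∈ D₂' and every T ≥ 0, if (p(t), x(t)) ∈ H₂ for all t ∈ [0, T], then (p(t), x(t)) ∈ D₂' for all t ∈ [0, T]. -/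

import Mathlib

open Set

/-- The synthesized refined domain `D₂'` for mode `q₂` of the nuclear reactor
system (coordinates `(p, x)`). -/
def D2' : Set (ℝ × ℝ) :=
  {v | 0 ≤ v.1 ∧ v.1 ≤ 1 ∧
       v.1 * (6145 / 12 - 4135 / 8) ≤ v.2 - 4135 / 8 ∧
       v.2 - 550 - (36 / 25) * (6575 / 12 - 550) * (v.1 - 5 / 6) ^ 2 ≤ 0}

/-- The domain `H₂ = ℝ² \ G₂₃'` for mode `q₂`. -/
def H2 : Set (ℝ × ℝ) :=
  {v | ¬ (v.1 = 1 ∧ 6145 / 12 ≤ v.2 ∧ v.2 ≤ 550)}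

/-- Grönwall-type lemma: if `g' ≥ g/10` on `[0, b]` and `g 0 ≥ 0` then `g b ≥ 0`. -/
lemma gron_aux (g g' : ℝ → ℝ) (hg : ∀ t, HasDerivAt g (g' t) t)
    (b : ℝ) (hb : 0 ≤ b) (hineq : ∀ t ∈ Icc (0:ℝ) b, g t / 10 ≤ g' t)
    (h0 : 0 ≤ g 0) : 0 ≤ g b := by
  set G : ℝ → ℝ := fun t => g t * Real.exp (-(t / 10)) with hGdef
  have hG : ∀ t, HasDerivAt G ((g' t - g t / 10) * Real.exp (-(t / 10))) t := by
    intro t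
    have he : HasDerivAt (fun t : ℝ => Real.exp (-(t / 10)))
        (Real.exp (-(t / 10)) * (-(1 / 10))) t := by
      have : HasDerivAt (fun t : ℝ => -(t / 10)) (-(1 / 10)) t := by
        exact ((hasDerivAt_id t).div_const 10).neg
      exact this.exp
    have := (hg t).mul he
    refine this.congr_deriv ?_
    ring
  have hmono : MonotoneOn G (Icc 0 b) := by
    apply monotoneOn_of_deriv_nonneg (convex_Icc 0 b)
    · exact fun t _ => ((hG t).continuousAt).continuousWithinAt
    · intro t _
      exact ((hG t).differentiableAt).differentiableWithinAt
    · intro t ht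
      rw [interior_Icc] at ht
      rw [(hG t).deriv]
      have h1 : g t / 10 ≤ g' t := hineq t ⟨le_of_lt ht.1, le_of_lt ht.2⟩
      have h2 : 0 < Real.exp (-(t / 10)) := Real.exp_pos _
      nlinarith
  have h01 : G 0 ≤ G b := hmono ⟨le_refl 0, hb⟩ ⟨hb, le_refl b⟩ hb
  have hG0 : G 0 = g 0 := by simp [hGdef]
  have hGb : G b = g b * Real.exp (-(b / 10)) := rfl
  have hexp : 0 < Real.exp (-(b / 10)) := Real.exp_pos _
  nlinarith [h01, hG0.symm ▸ h0]

/-- **Correctness of the synthesized invariant for mode `q₂` of the nuclear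
reactor system:** `D₂'` is a continuous invariant of `(H₂, f)` where
`f(p, x) = (1, x/10 − 6p − 50)`. -/
theorem nuclear_reactor_q2_invariant :
    ∀ p x : ℝ → ℝ,
      (∀ t : ℝ, HasDerivAt p 1 t) →
      (∀ t : ℝ, HasDerivAt x (x t / 10 - 6 * p t - 50) t) →
      (p 0, x 0) ∈ D2' →
      ∀ T ≥ (0:ℝ), (∀ t ∈ Icc (0:ℝ) T, (p t, x t) ∈ H2) →
        ∀ t ∈ Icc (0:ℝ) T, (p t, x t) ∈ D2' := by
  intro p x hp hx hinit T hT hH2 t ht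
  obtain ⟨hp0, hp1, hlow0, hupp0⟩ := hinit
  simp only [D2', mem_setOf_eq] at *
  -- p t = p 0 + t
  have hpt : ∀ s : ℝ, p s = p 0 + s := by
    have hq : ∀ s : ℝ, HasDerivAt (fun s => p s - s) 0 s := by
      intro s
      have := (hp s).sub (hasDerivAt_id s); rw [sub_self] at this; exact this
    have hconst : ∀ s : ℝ, p s - s = p 0 - 0 :=
      fun s => is_const_of_deriv_eq_zero
        (fun u => (hq u).differentiableAt) (fun u => (hq u).deriv) s 0
    intro s
    have := hconst s
    linarith
  -- the lower-line defect g
  set g : ℝ → ℝ := fun s => x s - 4135 / 8 - p s * (6145 / 12 - 4135 / 8) with hgdef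
  have hg : ∀ s, HasDerivAt g
      (x s / 10 - 6 * p s - 50 - (6145 / 12 - 4135 / 8)) s := by
    intro s
    have := ((hx s).sub_const (4135 / 8)).sub ((hp s).mul_const (6145 / 12 - 4135 / 8))
    refine this.congr_deriv ?_
    ring
  have hg0 : 0 ≤ g 0 := by simp only [hgdef]; linarith
  -- g stays nonnegative as long as p ≤ 1 on the interval
  have hgpos : ∀ b : ℝ, 0 ≤ b → (∀ s ∈ Icc (0:ℝ) b, p s ≤ 1) → 0 ≤ g b := by
    intro b hb hple
    apply gron_aux g (fun s => x s / 10 - 6 * p s - 50 - (6145 / 12 - 4135 / 8)) hg b hb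
      _ hg0
    intro s hs
    have := hple s hs
    simp only [hgdef]
    linarith
  -- the upper-parabola defect h
  set h : ℝ → ℝ := fun s =>
    550 + 36 / 25 * (6575 / 12 - 550) * (p s - 5 / 6) ^ 2 - x s with hhdef
  have hh : ∀ s, HasDerivAt h
      (36 / 25 * (6575 / 12 - 550) * (2 * (p s - 5 / 6)) -
        (x s / 10 - 6 * p s - 50)) s := by
    intro s
    have hsq : HasDerivAt (fun s => (p s - 5 / 6) ^ 2)
        ((2 : ℕ) * (p s - 5 / 6) ^ 1 * 1) s := ((hp s).sub_const (5 / 6)).pow 2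
    have := ((hsq.const_mul (36 / 25 * (6575 / 12 - 550))).const_add 550).sub (hx s)
    refine this.congr_deriv ?_
    push_cast
    ring
  have hh0 : 0 ≤ h 0 := by simp only [hhdef]; linarith
  have hhpos : ∀ b : ℝ, 0 ≤ b → 0 ≤ h b := by
    intro b hb
    apply gron_aux h _ hh b hb _ hh0
    intro s _
    simp only [hhdef]
    nlinarith [sq_nonneg (p s - 5 / 6)]
  -- T < 1 - p 0
  have hTlt : T < 1 - p 0 := by
    by_contra hle
    push_neg at hle
    set t1 : ℝ := 1 - p 0 with ht1def
    have ht1 : 0 ≤ t1 := by linarith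
    have hpt1 : p t1 = 1 := by rw [hpt]; ring
    have hgle : 0 ≤ g t1 := by
      apply hgpos t1 ht1
      intro s hs
      rw [hpt]
      linarith [hs.2]
    have hhle : 0 ≤ h t1 := hhpos t1 ht1
    have := hH2 t1 ⟨ht1, hle⟩
    simp only [H2, mem_setOf_eq] at this
    apply this
    refine ⟨hpt1, ?_, ?_⟩
    · simp only [hgdef] at hgle
      rw [hpt1] at hgle
      linarith
    · simp only [hhdef] at hhle
      rw [hpt1] at hhle
      nlinarith
  -- conclude
  have hple : ∀ s ∈ Icc (0:ℝ) t, p s ≤ 1 := by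
    intro s hs
    rw [hpt]
    have := ht.2
    linarith [hs.2]
  have hgt : 0 ≤ g t := hgpos t ht.1 hple
  have hht : 0 ≤ h t := hhpos t ht.1
  refine ⟨?_, ?_, ?_, ?_⟩
  · rw [hpt]; linarith [ht.1]
  · rw [hpt]; linarith [ht.2]
  · simp only [hgdef] at hgt; linarith
  · simp only [hhdef] at hht; linarith
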